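/- For every positive integer $s$, $\sum_{\tau \in P_s} (|\tau|-1)! \le (3/2)^s (s-1)!$, where $P_s$ is the set of set partitions of $\{1,\dots,s\}$ and $|\tau|$ denotes the number of blocks of $\tau$. -/

import Mathlib

open Finset

lemma two_mul_pow3_le (m : ℕ) : 2 * 3 ^ m ≤ 3 * Nat.factorial (m+1) := by
  induction m with
  | zero => norm_num
  | succ m ih =>
    match m, ih with
    | 0, _ => decide
    | (m+1), ih =>
      calc 2 * 3 ^ (m+2) = 3 * (2 * 3 ^ (m+1)) := by ring
      _ ≤ 3 * (3 * Nat.factorial (m+2)) := Nat.mul_le_mul_left _ ih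
      _ ≤ 3 * ((m+3) * Nat.factorial (m+2)) :=
          mul_le_mul_right (mul_le_mul_left (show 3 ≤ m+3 by omega) _) 3
      _ = 3 * Nat.factorial (m+3) := rfl

lemma Esum (m : ℕ) (hm : 1 ≤ m) :
    ∑ k ∈ Icc 1 m, (2/3:ℝ)^k / Nat.factorial k ≤ 20/21 - (9/7)*(2/9)^m := by
  induction m with
  | zero => omega
  | succ m ih =>
    rcases Nat.eq_or_lt_of_le hm with h | h
    · simp [← h]; norm_num
    · have hm' : 1 ≤ m := by omega
      have hstep : (2/3:ℝ)^(m+1) / Nat.factorial (m+1) ≤ (2/9)^m := by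
        have h1' : (2:ℝ) * 3 ^ m ≤ 3 * Nat.factorial (m+1) := by
          exact_mod_cast two_mul_pow3_le m
        have hf : (0:ℝ) < Nat.factorial (m+1) := by positivity
        rw [div_le_iff₀ hf]
        have hid : (2/3:ℝ)^(m+1) = (2/9)^m * ((2/3)*3^m) := by
          have h2 : (2/9:ℝ)^m * 3^m = (2/3)^m := by rw [← mul_pow]; norm_num
          rw [pow_succ, ← h2]; ring
        rw [hid]
        have h3 : (2/3:ℝ)*3^m ≤ Nat.factorial (m+1) := by linarith
        exact mul_le_mul_of_nonneg_left h3 (by positivity)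
      rw [Finset.sum_Icc_succ_top (by omega : 1 ≤ m+1)]
      have := ih hm'
      have h29 : ((2:ℝ)/9)^(m+1) = (2/9)^m * (2/9) := pow_succ _ _
      linarith

lemma key (n : ℕ) (hn : 2 ≤ n) :
    2*(2/3:ℝ)^n / Nat.factorial (n-1) + ∑ k ∈ Icc 1 (n-2), (2/3:ℝ)^k / Nat.factorial k ≤ 1 := by
  rcases Nat.eq_or_lt_of_le hn with h | h
  · simp [← h]; norm_num
  · obtain ⟨m, rfl⟩ : ∃ m, n = m + 3 := ⟨n - 3, by omega⟩
    have e1 : m + 3 - 2 = m + 1 := by omega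
    have e2 : m + 3 - 1 = m + 2 := by omega
    rw [e1, e2]
    have hE := Esum (m+1) (by omega)
    have hL : 2*(2/3:ℝ)^(m+3) / Nat.factorial (m+2) ≤ (4/3)*(2/9)^(m+1) := by
      have h1' : (2:ℝ) * 3 ^ (m+1) ≤ 3 * Nat.factorial (m+2) := by
        exact_mod_cast two_mul_pow3_le (m+1)
      have hf : (0:ℝ) < Nat.factorial (m+2) := by positivity
      rw [div_le_iff₀ hf]
      have hid : 2*(2/3:ℝ)^(m+3) = (2/9)^(m+1) * ((8/9)*3^(m+1)) := by
        have h2 : (2/9:ℝ)^(m+1) * 3^(m+1) = (2/3)^(m+1) := by rw [← mul_pow]; norm_num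
        have : (2/3:ℝ)^(m+3) = (2/3)^(m+1) * (4/9) := by ring
        rw [this, ← h2]; ring
      rw [hid, mul_comm (4/3:ℝ) _, mul_assoc]
      refine mul_le_mul_of_nonneg_left ?_ (by positivity)
      linarith
    have hpow1 : ((2:ℝ)/9)^(m+1) ≤ 1 :=
      pow_le_one₀ (by norm_num) (by norm_num)
    nlinarith

variable {α : Type*} [DecidableEq α]

def parts (S : Finset α) : Finset (Finset (Finset α)) :=
  S.powerset.powerset.filter fun P =>
    (∀ B ∈ P, B.Nonempty) ∧ ∀ i ∈ S, (P.filter fun B => i ∈ B).card = 1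

lemma mem_parts {S : Finset α} {P : Finset (Finset α)} :
    P ∈ parts S ↔ (∀ B ∈ P, B ⊆ S) ∧ (∀ B ∈ P, B.Nonempty) ∧
      ∀ i ∈ S, (P.filter fun B => i ∈ B).card = 1 := by
  unfold parts
  rw [mem_filter, mem_powerset]
  constructor
  · rintro ⟨h1, h2, h3⟩
    exact ⟨fun B hB => mem_powerset.1 (h1 hB), h2, h3⟩
  · rintro ⟨h1, h2, h3⟩
    exact ⟨fun B hB => mem_powerset.2 (h1 B hB), h2, h3⟩

lemma parts_block_eq {S : Finset α} {P : Finset (Finset α)} (hP : P ∈ parts S)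
    {B C : Finset α} (hB : B ∈ P) (hC : C ∈ P) {i : α} (hiB : i ∈ B) (hiC : i ∈ C) :
    B = C := by
  obtain ⟨hsub, _, huniq⟩ := mem_parts.1 hP
  have hiS : i ∈ S := hsub B hB hiB
  obtain ⟨D, hD⟩ := Finset.card_eq_one.1 (huniq i hiS)
  have h1 : B ∈ P.filter fun B => i ∈ B := mem_filter.2 ⟨hB, hiB⟩
  have h2 : C ∈ P.filter fun B => i ∈ B := mem_filter.2 ⟨hC, hiC⟩
  rw [hD, mem_singleton] at h1 h2
  rw [h1, h2]

lemma parts_card_filter_not {S : Finset α} {P : Finset (Finset α)} (hP : P ∈ parts S)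
    {a : α} (ha : a ∈ S) :
    P.card = (P.filter fun B => a ∉ B).card + 1 := by
  have h := Finset.card_filter_add_card_filter_not (s := P) (p := fun B => a ∈ B)
  have h1 := (mem_parts.1 hP).2.2 a ha
  omega

lemma parts_erase {S : Finset α} {P : Finset (Finset α)} (hP : P ∈ parts S)
    {B : Finset α} (hB : B ∈ P) : P.erase B ∈ parts (S \ B) := by
  obtain ⟨hsub, hne, huniq⟩ := mem_parts.1 hP
  refine mem_parts.2 ⟨?_, fun C hC => hne C (mem_of_mem_erase hC), ?_⟩
  · intro C hC x hx
    have hCP := mem_of_mem_erase hC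
    refine mem_sdiff.2 ⟨hsub C hCP hx, fun hxB => (ne_of_mem_erase hC) ?_⟩
    exact parts_block_eq hP hCP hB hx hxB
  · intro i hi
    rw [mem_sdiff] at hi
    rw [filter_erase]
    rw [Finset.erase_eq_of_notMem (by simp [hi.2])]
    exact huniq i hi.1

lemma parts_not_mem {S B : Finset α} {Q : Finset (Finset α)} (hBne : B.Nonempty)
    (hQ : Q ∈ parts (S \ B)) : B ∉ Q := by
  intro h
  obtain ⟨x, hx⟩ := hBne
  have := (mem_parts.1 hQ).1 B h hx
  rw [mem_sdiff] at this
  exact this.2 hx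

lemma parts_insert {S B : Finset α} {Q : Finset (Finset α)} (hBne : B.Nonempty)
    (hBS : B ⊆ S) (hQ : Q ∈ parts (S \ B)) : insert B Q ∈ parts S := by
  obtain ⟨hsub, hne, huniq⟩ := mem_parts.1 hQ
  refine mem_parts.2 ⟨?_, ?_, ?_⟩
  · intro C hC
    rcases mem_insert.1 hC with rfl | hC
    · exact hBS
    · exact (hsub C hC).trans (sdiff_subset)
  · intro C hC
    rcases mem_insert.1 hC with rfl | hC
    · exact hBne
    · exact hne C hC
  · intro i hi
    rw [filter_insert]
    by_cases hiB : i ∈ B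
    · rw [if_pos hiB]
      have hempty : Q.filter (fun C => i ∈ C) = ∅ := by
        rw [Finset.filter_eq_empty_iff]
        intro C hC hiC
        exact (mem_sdiff.1 (hsub C hC hiC)).2 hiB
      rw [hempty]
      simp
    · rw [if_neg hiB]
      exact huniq i (mem_sdiff.2 ⟨hi, hiB⟩)

lemma singleton_mem_parts {S : Finset α} (hS : S.Nonempty) : {S} ∈ parts S := by
  refine mem_parts.2 ⟨by simp, by simpa using hS, ?_⟩
  intro i hi
  rw [filter_singleton, if_pos hi]
  simp

lemma parts_eq_singleton {S : Finset α} {P : Finset (Finset α)} (hP : P ∈ parts S)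
    {a : α} (ha : a ∈ S) (h : P.filter (fun B => a ∉ B) = ∅) : P = {S} := by
  obtain ⟨hsub, hne, huniq⟩ := mem_parts.1 hP
  obtain ⟨B0, hB0⟩ := Finset.card_eq_one.1 (huniq a ha)
  have hB0P : B0 ∈ P := by
    have : B0 ∈ P.filter fun B => a ∈ B := by rw [hB0]; exact mem_singleton_self _
    exact (mem_filter.1 this).1
  have hall : ∀ C ∈ P, C = B0 := by
    intro C hC
    have haC : a ∈ C := by
      by_contra haC
      have : C ∈ P.filter fun B => a ∉ B := mem_filter.2 ⟨hC, haC⟩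
      rw [h] at this
      exact notMem_empty _ this
    have : C ∈ P.filter fun B => a ∈ B := mem_filter.2 ⟨hC, haC⟩
    rw [hB0, mem_singleton] at this
    exact this
  have hPB0 : P = {B0} := by
    apply Finset.eq_singleton_iff_unique_mem.2
    exact ⟨hB0P, hall⟩
  have hB0S : B0 = S := by
    apply Finset.Subset.antisymm (hsub B0 hB0P)
    intro i hi
    obtain ⟨C, hC⟩ := Finset.card_eq_one.1 (huniq i hi)
    have hCP : C ∈ P ∧ i ∈ C := by
      have : C ∈ P.filter fun B => i ∈ B := by rw [hC]; exact mem_singleton_self _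
      exact mem_filter.1 this
    rw [← hall C hCP.1]
    exact hCP.2
  rw [hPB0, hB0S]
-- decomp, appended to b.lean for testing
lemma parts_decomp {S : Finset α} {a : α} (ha : a ∈ S) :
    ∑ σ ∈ parts S, ((Nat.factorial (σ.card - 1)) : ℝ)
      = 1 + ∑ B ∈ (S.erase a).powerset.filter Finset.Nonempty,
          ∑ σ ∈ parts (S \ B), ((Nat.factorial (σ.card - 1)) : ℝ) := by
  have hS : S.Nonempty := ⟨a, ha⟩
  -- Step 1: pointwise identity
  have step1 : ∀ σ ∈ parts S,
      ((Nat.factorial (σ.card - 1)) : ℝ)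
        = (if σ = {S} then (1:ℝ) else 0)
          + ∑ B ∈ σ.filter (fun B => a ∉ B), ((Nat.factorial (σ.card - 2)) : ℝ) := by
    intro σ hσ
    have hm := parts_card_filter_not hσ ha
    rw [Finset.sum_const, nsmul_eq_mul]
    by_cases hσS : σ = {S}
    · subst hσS
      rw [if_pos rfl]
      have hf : ({S} : Finset (Finset α)).filter (fun B => a ∉ B) = ∅ := by
        rw [filter_singleton, if_neg (by simp [ha])]
      rw [hf]
      simp
    · rw [if_neg hσS]
      have hm1 : 1 ≤ (σ.filter fun B => a ∉ B).card := by
        rcases Nat.eq_zero_or_pos (σ.filter fun B => a ∉ B).card with h0 | h1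
        · exact absurd (parts_eq_singleton hσ ha (Finset.card_eq_zero.1 h0)) hσS
        · exact h1
      obtain ⟨k, hk⟩ : ∃ k, (σ.filter fun B => a ∉ B).card = k + 1 :=
        ⟨(σ.filter fun B => a ∉ B).card - 1, by omega⟩
      have e1 : σ.card - 1 = k + 1 := by omega
      have e2 : σ.card - 2 = k := by omega
      rw [e1, e2, hk, Nat.factorial_succ]
      push_cast
      ring
  rw [Finset.sum_congr rfl step1, Finset.sum_add_distrib]
  congr 1
  · rw [Finset.sum_ite_eq' (parts S) ({S} : Finset (Finset α)) (fun _ => (1:ℝ))]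
    rw [if_pos (singleton_mem_parts hS)]
  · -- double sum bijection
    rw [← Finset.sum_sigma (parts S) (fun σ => σ.filter (fun B => a ∉ B))
      (fun p => ((Nat.factorial (p.1.card - 2)) : ℝ))]
    rw [← Finset.sum_sigma ((S.erase a).powerset.filter Finset.Nonempty)
      (fun B => parts (S \ B)) (fun p => ((Nat.factorial (p.2.card - 1)) : ℝ))]
    refine Finset.sum_nbij' (fun p => ⟨p.2, p.1.erase p.2⟩) (fun p => ⟨insert p.1 p.2, p.1⟩)
      ?_ ?_ ?_ ?_ ?_
    · rintro ⟨σ, B⟩ hp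
      rw [Finset.mem_sigma] at hp ⊢
      obtain ⟨hσ, hB⟩ := hp
      rw [mem_filter] at hB
      obtain ⟨hBσ, haB⟩ := hB
      have hBS : B ⊆ S := (mem_parts.1 hσ).1 B hBσ
      have hBne : B.Nonempty := (mem_parts.1 hσ).2.1 B hBσ
      refine ⟨mem_filter.2 ⟨mem_powerset.2 (Finset.subset_erase.2 ⟨hBS, haB⟩), hBne⟩, ?_⟩
      exact parts_erase hσ hBσ
    · rintro ⟨B, σ'⟩ hp
      rw [Finset.mem_sigma] at hp ⊢
      obtain ⟨hB, hσ'⟩ := hp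
      rw [mem_filter, mem_powerset, Finset.subset_erase] at hB
      obtain ⟨⟨hBS, haB⟩, hBne⟩ := hB
      refine ⟨parts_insert hBne hBS hσ', ?_⟩
      rw [mem_filter]
      exact ⟨mem_insert_self _ _, haB⟩
    · rintro ⟨σ, B⟩ hp
      rw [Finset.mem_sigma] at hp
      have hBσ : B ∈ σ := (mem_filter.1 hp.2).1
      simp [Finset.insert_erase hBσ]
    · rintro ⟨B, σ'⟩ hp
      rw [Finset.mem_sigma] at hp
      obtain ⟨hB, hσ'⟩ := hp
      rw [mem_filter, mem_powerset, Finset.subset_erase] at hB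
      have hBσ' : B ∉ σ' := parts_not_mem hB.2 hσ'
      simp [Finset.erase_insert hBσ']
    · rintro ⟨σ, B⟩ hp
      rw [Finset.mem_sigma] at hp
      have hBσ : B ∈ σ := (mem_filter.1 hp.2).1
      simp only
      rw [Finset.card_erase_of_mem hBσ]
      congr 1
lemma sum_powerset_filter_nonempty (T : Finset α) (g : ℕ → ℝ) :
    ∑ B ∈ T.powerset.filter Finset.Nonempty, g B.card
      = ∑ k ∈ Icc 1 T.card, (T.card.choose k : ℝ) * g k := by
  rw [Finset.sum_filter, Finset.sum_powerset]
  have hinner : ∀ j ∈ Finset.range (T.card + 1),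
      ∑ B ∈ Finset.powersetCard j T, (if B.Nonempty then g B.card else 0)
        = (T.card.choose j : ℝ) * (if 1 ≤ j then g j else 0) := by
    intro j _
    have : ∀ B ∈ Finset.powersetCard j T,
        (if B.Nonempty then g B.card else 0) = (if 1 ≤ j then g j else 0) := by
      intro B hB
      have hc : B.card = j := (Finset.mem_powersetCard.1 hB).2
      have : B.Nonempty ↔ 1 ≤ j := by
        rw [← hc, ← Finset.card_pos]
        omega
      by_cases h : 1 ≤ j
      · rw [if_pos (this.2 h), if_pos h, hc]
      · rw [if_neg (fun hne => h (this.1 hne)), if_neg h]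
    rw [Finset.sum_congr rfl this, Finset.sum_const, Finset.card_powersetCard,
      nsmul_eq_mul]
  rw [Finset.sum_congr rfl hinner, Finset.range_eq_Ico,
    Finset.sum_eq_sum_Ico_succ_bot (Nat.succ_pos T.card)]
  rw [if_neg (by omega : ¬ 1 ≤ 0), mul_zero, zero_add, Nat.succ_eq_add_one, Finset.Ico_add_one_right_eq_Icc]
  refine Finset.sum_congr rfl fun j hj => ?_
  rw [if_pos (Finset.mem_Icc.1 hj).1]

noncomputable def bnd (n : ℕ) : ℝ := if n = 1 then 1 else (3/2)^n * Nat.factorial (n-1)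

lemma bnd_le (n : ℕ) : bnd n ≤ (3/2)^n * Nat.factorial (n-1) := by
  unfold bnd
  by_cases h : n = 1
  · rw [if_pos h, h]; norm_num
  · rw [if_neg h]

lemma final_ineq (n : ℕ) (hn : 2 ≤ n) :
    1 + ∑ k ∈ Icc 1 (n-1), ((n-1).choose k : ℝ) * bnd (n - k)
      ≤ (3/2)^n * Nat.factorial (n-1) := by
  obtain ⟨m, rfl⟩ : ∃ m, n = m + 2 := ⟨n - 2, by omega⟩
  have e1 : m + 2 - 1 = m + 1 := by omega
  rw [e1]
  rw [Finset.sum_Icc_succ_top (by omega : 1 ≤ m + 1)]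
  have etop : ((m+1).choose (m+1) : ℝ) * bnd (m + 2 - (m+1)) = 1 := by
    rw [Nat.choose_self]
    have : m + 2 - (m + 1) = 1 := by omega
    rw [this]
    simp [bnd]
  rw [etop]
  have hterm : ∀ k ∈ Icc 1 m,
      ((m+1).choose k : ℝ) * bnd (m + 2 - k)
        = ((3/2)^(m+2) * Nat.factorial (m+1)) * ((2/3)^k / Nat.factorial k) := by
    intro k hk
    obtain ⟨hk1, hkm⟩ := Finset.mem_Icc.1 hk
    have h2 : 2 ≤ m + 2 - k := by omega
    have hb : bnd (m + 2 - k) = (3/2)^(m+2-k) * Nat.factorial (m + 2 - k - 1) := by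
      rw [bnd, if_neg (by omega)]
    rw [hb]
    have e2 : m + 2 - k - 1 = m + 1 - k := by omega
    rw [e2]
    have hch : ((m+1).choose k : ℝ) * Nat.factorial k * Nat.factorial (m + 1 - k)
        = Nat.factorial (m+1) := by
      exact_mod_cast congrArg (Nat.cast : ℕ → ℝ)
        (Nat.choose_mul_factorial_mul_factorial (by omega : k ≤ m + 1))
    have hpow : (3/2:ℝ)^(m+2-k) * (3/2)^k = (3/2)^(m+2) := by
      rw [← pow_add]
      congr 1
      omega
    have hpow2 : (2/3:ℝ)^k * (3/2)^k = 1 := by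
      rw [← mul_pow]; norm_num
    have hfk : (0:ℝ) < Nat.factorial k := by positivity
    rw [← hch, ← hpow]
    have hfk' : (Nat.factorial k : ℝ) ≠ 0 := ne_of_gt hfk
    set p := (3/2:ℝ)^(m+2-k) with hp
    set q := (3/2:ℝ)^k with hq
    set r := (2/3:ℝ)^k with hr
    clear_value p q r
    have h1 : (Nat.factorial k : ℝ) * (Nat.factorial k : ℝ)⁻¹ = 1 := mul_inv_cancel₀ hfk'
    rw [div_eq_mul_inv]
    calc ((m+1).choose k : ℝ) * (p * (Nat.factorial (m+1-k) : ℝ))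
        = ((m+1).choose k : ℝ) * (p * (Nat.factorial (m+1-k) : ℝ))
          * ((r * q) * ((Nat.factorial k : ℝ) * (Nat.factorial k : ℝ)⁻¹)) := by
          rw [hpow2, h1]; ring
      _ = p * q * (((m+1).choose k : ℝ) * (Nat.factorial k : ℝ)
            * (Nat.factorial (m+1-k) : ℝ)) * (r * (Nat.factorial k : ℝ)⁻¹) := by ring
  rw [Finset.sum_congr rfl hterm, ← Finset.mul_sum]
  have hkey := key (m+2) (by omega)
  have e3 : m + 2 - 2 = m := by omega
  have e4 : m + 2 - 1 = m + 1 := by omega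
  rw [e3, e4] at hkey
  have hf : (0:ℝ) < Nat.factorial (m+1) := by positivity
  have hp : (0:ℝ) < (3/2:ℝ)^(m+2) := by positivity
  have hprod : (3/2:ℝ)^(m+2) * (2/3)^(m+2) = 1 := by
    rw [← mul_pow]; norm_num
  have h5 : (3/2:ℝ)^(m+2) * Nat.factorial (m+1)
      * (2*(2/3:ℝ)^(m+2) / Nat.factorial (m+1)) = 2 := by
    field_simp
    nlinarith [hprod]
  nlinarith [mul_le_mul_of_nonneg_left hkey (le_of_lt (mul_pos hp hf))]

lemma parts_sum_le (n : ℕ) : ∀ S : Finset α, S.card = n → S.Nonempty →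
    ∑ σ ∈ parts S, ((Nat.factorial (σ.card - 1)) : ℝ) ≤ bnd n := by
  induction n using Nat.strong_induction_on with
  | _ n ih =>
  intro S hcard hne
  obtain ⟨a, ha⟩ := hne
  by_cases h1 : n = 1
  · subst h1
    have hSa : S = {a} := by
      obtain ⟨x, hx⟩ := Finset.card_eq_one.1 hcard
      rw [hx] at ha ⊢
      rw [Finset.mem_singleton.1 ha]
    have hps : parts S = {({S} : Finset (Finset α))} := by
      apply Finset.Subset.antisymm
      · intro P hP
        rw [Finset.mem_singleton]
        apply parts_eq_singleton hP ha
        rw [Finset.filter_eq_empty_iff]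
        intro B hB haB
        obtain ⟨x, hx⟩ := (mem_parts.1 hP).2.1 B hB
        have hxS : x ∈ S := (mem_parts.1 hP).1 B hB hx
        rw [hSa, Finset.mem_singleton] at hxS
        exact haB (hxS ▸ hx)
      · rw [Finset.singleton_subset_iff]
        exact singleton_mem_parts ⟨a, ha⟩
    rw [hps, Finset.sum_singleton, Finset.card_singleton]
    simp [bnd]
  · have hn2 : 2 ≤ n := by
      have : 1 ≤ n := by
        rw [← hcard]
        exact Finset.card_pos.2 ⟨a, ha⟩
      omega
    rw [parts_decomp ha]
    have hstep : ∑ B ∈ (S.erase a).powerset.filter Finset.Nonempty,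
        ∑ σ ∈ parts (S \ B), ((Nat.factorial (σ.card - 1)) : ℝ)
        ≤ ∑ B ∈ (S.erase a).powerset.filter Finset.Nonempty, bnd (n - B.card) := by
      apply Finset.sum_le_sum
      intro B hB
      rw [Finset.mem_filter, Finset.mem_powerset, Finset.subset_erase] at hB
      obtain ⟨⟨hBS, haB⟩, hBne⟩ := hB
      have hBcard : 1 ≤ B.card := Finset.card_pos.2 hBne
      have hBcard2 : B.card ≤ n - 1 := by
        have := Finset.card_le_card (Finset.subset_erase.2 ⟨hBS, haB⟩)
        rw [Finset.card_erase_of_mem ha, hcard] at this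
        exact this
      have hsd : (S \ B).card = n - B.card := by
        rw [Finset.card_sdiff_of_subset hBS, hcard]
      exact ih (n - B.card) (by omega) (S \ B) hsd
        ⟨a, Finset.mem_sdiff.2 ⟨ha, haB⟩⟩
    have hgroup : ∑ B ∈ (S.erase a).powerset.filter Finset.Nonempty, bnd (n - B.card)
        = ∑ k ∈ Icc 1 (n-1), ((n-1).choose k : ℝ) * bnd (n - k) := by
      have hc : (S.erase a).card = n - 1 := by
        rw [Finset.card_erase_of_mem ha, hcard]
      rw [sum_powerset_filter_nonempty (S.erase a) (fun k => bnd (n - k)), hc]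
    calc 1 + ∑ B ∈ (S.erase a).powerset.filter Finset.Nonempty,
          ∑ σ ∈ parts (S \ B), ((Nat.factorial (σ.card - 1)) : ℝ)
        ≤ 1 + ∑ k ∈ Icc 1 (n-1), ((n-1).choose k : ℝ) * bnd (n - k) := by
          rw [← hgroup]; linarith
      _ ≤ (3/2)^n * Nat.factorial (n-1) := final_ineq n hn2
      _ = bnd n := by rw [bnd, if_neg h1]

/-- The finset of unordered partitions of `Fin s` into nonempty blocks,
represented as finsets of pairwise-disjoint nonempty blocks covering `Fin s`. -/
def setPartitions (s : ℕ) : Finset (Finset (Finset (Fin s))) :=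
  Finset.univ.filter fun P =>
    (∀ B ∈ P, B.Nonempty) ∧ ∀ i : Fin s, (P.filter fun B => i ∈ B).card = 1

theorem sum_blocks_factorial_le (s : ℕ) (hs : 1 ≤ s) :
    ∑ τ ∈ setPartitions s, ((Nat.factorial (τ.card - 1)) : ℝ) ≤ (3 / 2) ^ s * (Nat.factorial (s-1)) := by
  have heq : setPartitions s = parts (Finset.univ : Finset (Fin s)) := by
    ext P
    simp only [setPartitions, Finset.mem_filter, Finset.mem_univ, true_and]
    constructor
    · rintro ⟨h1, h2⟩
      exact mem_parts.2 ⟨fun B _ => Finset.subset_univ B, h1, fun i _ => h2 i⟩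
    · intro h
      obtain ⟨_, h1, h2⟩ := mem_parts.1 h
      exact ⟨h1, fun i => h2 i (Finset.mem_univ i)⟩
  have hcard : (Finset.univ : Finset (Fin s)).card = s := by simp
  have hne : (Finset.univ : Finset (Fin s)).Nonempty := ⟨⟨0, hs⟩, Finset.mem_univ _⟩
  rw [heq]
  exact le_trans (parts_sum_le s _ hcard hne) (bnd_le s)
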